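/- Let G = SL_{r+1}(𝔽_q) with r ≥ 1, and let t₁ ∈ G be an element whose characteristic polynomial is irreducible of degree r+1, and t₂ ∈ G an element whose characteristic polynomial is a product of irreducible polynomials of degrees 1 and r (r ≥ 2). Let T₁, T₂ be the centralizers of t₁, t₂ respectively. Then for all g ∈ G, T₁ ∩ g⁻¹T₂g = Z(G). -/

import Mathlib

open Matrix Polynomial

open Module

variable {F : Type} [Field F]

private lemma charpoly_sub_smul_one {n : ℕ} (M : Matrix (Fin n) (Fin n) F) (a : F) :
    (M - a • 1).charpoly = Polynomial.comp M.charpoly (X + C a) := by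
  classical
  let g : F[X] →+* F[X] := (aeval (X + C a) : F[X] →ₐ[F] F[X]).toRingHom
  have hmap : (charmatrix M).map g = charmatrix (M - a • 1) := by
    ext i j
    by_cases h : i = j
    · subst h
      simp only [charmatrix_apply_eq, Matrix.sub_apply, Matrix.smul_apply, one_apply_eq, g,
        AlgHom.toRingHom_eq_coe, Matrix.map_apply, RingHom.coe_coe, map_sub, aeval_X, aeval_C]
      simp [algebraMap_eq]
      ring
    · simp [g, charmatrix_apply_ne _ _ _ h, one_apply_ne h, aeval_C, algebraMap_eq]
  rw [Matrix.charpoly, Matrix.charpoly, ← hmap, comp_eq_aeval]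
  rw [show (charmatrix M).map ⇑g = g.mapMatrix (charmatrix M) from rfl, ← RingHom.map_det]
  rfl

private lemma charpoly_toLin' {n : ℕ} (M : Matrix (Fin n) (Fin n) F) :
    (Matrix.toLin' M).charpoly = M.charpoly := by
  rw [← LinearMap.charpoly_toMatrix (Matrix.toLin' M) (Pi.basisFun F (Fin n)),
    LinearMap.toMatrix_eq_toMatrix', LinearMap.toMatrix'_toLin']

private lemma finrank_eigenspace_le_one {n : ℕ} (B : Matrix (Fin n) (Fin n) F) (a : F)
    (q : F[X]) (hq : q.eval a ≠ 0) (hch : B.charpoly = (X - C a) * q) :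
    finrank F (Module.End.eigenspace (Matrix.toLin' B) a) ≤ 1 := by
  classical
  set ψ : Module.End F (Fin n → F) := Matrix.toLin' (B - a • 1) with hψ
  have hψ' : ψ = Matrix.toLin' B - a • 1 := by
    rw [hψ, map_sub, _root_.map_smul]
    congr 1
    ext v i
    simp [Matrix.toLin'_apply]
  have hle : Module.End.eigenspace (Matrix.toLin' B) a ≤ ψ.maxGenEigenspace 0 := by
    intro x hx
    rw [Module.End.mem_eigenspace_iff] at hx
    rw [Module.End.mem_maxGenEigenspace]
    refine ⟨1, ?_⟩
    simp [hψ', hx, sub_eq_zero]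
  have hfr : finrank F (ψ.maxGenEigenspace 0) = natTrailingDegree ψ.charpoly :=
    LinearMap.finrank_maxGenEigenspace_zero_eq ψ
  have hchψ : ψ.charpoly = X * (Polynomial.comp q (X + C a)) := by
    rw [hψ, _root_.charpoly_toLin', charpoly_sub_smul_one, hch, mul_comp, sub_comp, X_comp, C_comp]
    ring_nf
  have hq0 : Polynomial.comp q (X + C a) ≠ 0 := by
    intro h0
    apply hq
    have := congrArg (Polynomial.eval 0) h0
    simpa [eval_comp] using this
  have htd : natTrailingDegree ψ.charpoly = 1 := by
    rw [hchψ, natTrailingDegree_mul X_ne_zero hq0, natTrailingDegree_X,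
      Polynomial.natTrailingDegree_eq_zero.mpr (Or.inr ?_)]
    · simpa [coeff_zero_eq_eval_zero, eval_comp] using hq
  calc finrank F (Module.End.eigenspace (Matrix.toLin' B) a)
      ≤ finrank F (ψ.maxGenEigenspace 0) := Submodule.finrank_mono hle
    _ = 1 := by rw [hfr, htd]

private lemma aeval_restrict_coe {V : Type} [AddCommGroup V] [Module F V]
    (φ : Module.End F V) (W : Submodule F V) (h : ∀ x ∈ W, φ x ∈ W) (p : F[X]) (w : W) :
    ((aeval (LinearMap.restrict φ h) p) w : V) = (aeval φ p) (w : V) := by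
  induction p using Polynomial.induction_on' with
  | add p q hp hq => simp [map_add, hp, hq]
  | monomial k c =>
      simp only [aeval_monomial, Module.End.mul_apply, Module.algebraMap_end_apply,
        LinearMap.smul_apply]
      rw [Module.End.pow_restrict]
      simp [LinearMap.restrict_apply]

private lemma invariant_eq_top {n : ℕ} (A : Matrix (Fin n) (Fin n) F)
    (hA : Irreducible A.charpoly) (W : Submodule F (Fin n → F)) (hW : W ≠ ⊥)
    (hinv : ∀ w ∈ W, Matrix.toLin' A w ∈ W) : W = ⊤ := by
  classical
  have hn : 0 < n := by
    rcases Nat.eq_zero_or_pos n with h0 | h0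
    · exfalso
      subst h0
      have : A.charpoly = 1 := by
        simp [Matrix.charpoly, Matrix.det_fin_zero]
      rw [this] at hA
      exact hA.not_isUnit isUnit_one
    · exact h0
  set φ : Module.End F (Fin n → F) := Matrix.toLin' A with hφ
  haveI : Nontrivial (Fin n → F) := by
    have : 0 < finrank F (Fin n → F) := by simpa [Module.finrank_pi] using hn
    exact Module.nontrivial_of_finrank_pos this
  haveI : Nontrivial W := Submodule.nontrivial_iff_ne_bot.mpr hW
  have hφint : IsIntegral F φ := LinearMap.isIntegral φ
  -- minpoly φ = charpoly A
  have hdvd : minpoly F φ ∣ A.charpoly := by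
    rw [← _root_.charpoly_toLin' A]
    exact LinearMap.minpoly_dvd_charpoly φ
  have hmon : (minpoly F φ).Monic := minpoly.monic hφint
  have hnu : ¬ IsUnit (minpoly F φ) := by
    rw [hmon.isUnit_iff]
    intro h1
    have := minpoly.natDegree_pos hφint
    rw [h1] at this
    simp at this
  have hass : Associated (minpoly F φ) A.charpoly := by
    obtain ⟨c, hc⟩ := hdvd
    rcases hA.isUnit_or_isUnit hc with h | h
    · exact absurd h hnu
    · exact ⟨h.unit, by rw [hc]; simp⟩
  have hmin_eq : minpoly F φ = A.charpoly :=
    Polynomial.eq_of_monic_of_associated hmon (Matrix.charpoly_monic A) hass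
  -- the restriction
  set ψ : Module.End F W := LinearMap.restrict φ hinv with hψdef
  have hψ0 : aeval ψ (minpoly F φ) = 0 := by
    refine LinearMap.ext fun w => Subtype.ext ?_
    have := aeval_restrict_coe φ W hinv (minpoly F φ) w
    rw [minpoly.aeval] at this
    simpa [hψdef] using this
  have hψdvd : minpoly F ψ ∣ minpoly F φ := minpoly.dvd F ψ hψ0
  have hψint : IsIntegral F ψ := LinearMap.isIntegral ψ
  have hψmon : (minpoly F ψ).Monic := minpoly.monic hψint
  have hψnu : ¬ IsUnit (minpoly F ψ) := by
    rw [hψmon.isUnit_iff]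
    intro h1
    have := minpoly.natDegree_pos hψint
    rw [h1] at this
    simp at this
  have hirr : Irreducible (minpoly F φ) := hmin_eq ▸ hA
  have hψeq : minpoly F ψ = minpoly F φ := by
    obtain ⟨c, hc⟩ := hψdvd
    rcases hirr.isUnit_or_isUnit hc with h | h
    · exact absurd h hψnu
    · exact Polynomial.eq_of_monic_of_associated hψmon hmon ⟨h.unit, by rw [hc]; simp⟩
  -- degree bound
  have h1 : (minpoly F ψ).natDegree ≤ finrank F W := by
    have hd : minpoly F ψ ∣ ψ.charpoly := LinearMap.minpoly_dvd_charpoly ψ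
    have := Polynomial.natDegree_le_of_dvd hd (LinearMap.charpoly_monic ψ).ne_zero
    rwa [LinearMap.charpoly_natDegree] at this
  have h2 : (minpoly F ψ).natDegree = n := by
    rw [hψeq, hmin_eq, Matrix.charpoly_natDegree_eq_dim, Fintype.card_fin]
  apply Submodule.eq_top_of_finrank_eq
  have h3 : finrank F (Fin n → F) = n := by simp [Module.finrank_pi]
  have h4 := Submodule.finrank_le W
  rw [h3] at h4
  rw [h3]
  omega

private lemma eval_charpoly_det {F : Type} [Field F] {n : ℕ} (M : Matrix (Fin n) (Fin n) F) (a : F) :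
    M.charpoly.eval a = (a • 1 - M).det := by
  classical
  have hmap : (charmatrix M).map ⇑(evalRingHom a) = a • (1 : Matrix (Fin n) (Fin n) F) - M := by
    ext i j
    by_cases h : i = j
    · subst h
      simp [charmatrix_apply_eq, Matrix.sub_apply, Matrix.smul_apply, one_apply_eq]
    · simp [charmatrix_apply_ne _ _ _ h, one_apply_ne h, Matrix.sub_apply, Matrix.smul_apply]
  rw [Matrix.charpoly, ← hmap,
    show (charmatrix M).map ⇑(evalRingHom a) = (evalRingHom a).mapMatrix (charmatrix M) from rfl,
    ← RingHom.map_det]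
  rfl

/-- In `G = SL_{r+1}(𝔽_q)` (`r ≥ 2`), let `t₁` have irreducible characteristic polynomial
(of degree `r+1`) and let the characteristic polynomial of `t₂` be a product of irreducible
polynomials of degrees `1` and `r`. If `T₁, T₂` are the centralizers of `t₁, t₂`, then for
all `g ∈ G` we have `T₁ ∩ g⁻¹T₂g = Z(G)`. -/
theorem sl_tori_intersection (F : Type) [Field F] [Fintype F] (r : ℕ) (hr : 2 ≤ r)
    (t₁ t₂ : SpecialLinearGroup (Fin (r + 1)) F)
    (h₁ : Irreducible (Matrix.charpoly (t₁ : Matrix (Fin (r + 1)) (Fin (r + 1)) F)))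
    (h₂ : ∃ p q : Polynomial F, Irreducible p ∧ Irreducible q ∧
      p.natDegree = 1 ∧ q.natDegree = r ∧
      Matrix.charpoly (t₂ : Matrix (Fin (r + 1)) (Fin (r + 1)) F) = p * q)
    (g : SpecialLinearGroup (Fin (r + 1)) F) :
    Subgroup.centralizer {t₁} ⊓
        (Subgroup.centralizer {t₂}).map (MulAut.conj g⁻¹).toMonoidHom =
      Subgroup.center (SpecialLinearGroup (Fin (r + 1)) F) := by
  classical
  obtain ⟨p, q, hpirr, hqirr, hp1, hqr, hchar⟩ := h₂
  apply le_antisymm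
  · -- hard direction
    intro x hx
    rw [Subgroup.mem_inf] at hx
    obtain ⟨hx1, hx2⟩ := hx
    rw [Subgroup.mem_map] at hx2
    obtain ⟨y, hy, hyx⟩ := hx2
    have hy2 : y = g * x * g⁻¹ := by
      rw [← hyx]
      simp only [MulEquiv.toMonoidHom_eq_coe, MonoidHom.coe_coe, MulAut.conj_apply, inv_inv]
      group
    have ht₁x : t₁ * x = x * t₁ := Subgroup.mem_centralizer_iff.mp hx1 t₁ rfl
    have ht₂y : t₂ * y = y * t₂ := Subgroup.mem_centralizer_iff.mp hy t₂ rfl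
    -- pass to matrices
    set A : Matrix (Fin (r + 1)) (Fin (r + 1)) F := ↑t₁ with hA
    set B : Matrix (Fin (r + 1)) (Fin (r + 1)) F := ↑t₂ with hB
    set Xm : Matrix (Fin (r + 1)) (Fin (r + 1)) F := ↑x with hXmdef
    set Gm : Matrix (Fin (r + 1)) (Fin (r + 1)) F := ↑g with hGm
    set Gi : Matrix (Fin (r + 1)) (Fin (r + 1)) F := ↑(g⁻¹) with hGidef
    have hGGi : Gm * Gi = 1 := by
      rw [hGm, hGidef, ← Matrix.SpecialLinearGroup.coe_mul, mul_inv_cancel,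
        Matrix.SpecialLinearGroup.coe_one]
    have hGiG : Gi * Gm = 1 := by
      rw [hGm, hGidef, ← Matrix.SpecialLinearGroup.coe_mul, inv_mul_cancel,
        Matrix.SpecialLinearGroup.coe_one]
    have hAX : A * Xm = Xm * A := by
      have := congrArg (fun z : SpecialLinearGroup (Fin (r + 1)) F =>
        (z : Matrix (Fin (r + 1)) (Fin (r + 1)) F)) ht₁x
      simpa [Matrix.SpecialLinearGroup.coe_mul] using this
    have hYm : (y : Matrix (Fin (r + 1)) (Fin (r + 1)) F) = Gm * Xm * Gi := by
      rw [hy2]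
      simp only [Matrix.SpecialLinearGroup.coe_mul]; rfl
    have hBC : B * (Gm * Xm * Gi) = (Gm * Xm * Gi) * B := by
      have := congrArg (fun z : SpecialLinearGroup (Fin (r + 1)) F =>
        (z : Matrix (Fin (r + 1)) (Fin (r + 1)) F)) ht₂y
      simpa [Matrix.SpecialLinearGroup.coe_mul, hYm] using this
    -- the root of p
    obtain ⟨c, hc0, d, hp⟩ := Polynomial.natDegree_eq_one.mp hp1
    set a₀ : F := -d / c with ha₀
    have hproot : p.eval a₀ = 0 := by
      rw [← hp]
      simp only [eval_add, eval_mul, eval_C, eval_X, ha₀]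
      field_simp
      ring
    have hpfac : p = C c * (X - C a₀) := by
      rw [← hp]
      have hca : c * a₀ = -d := by rw [ha₀]; field_simp
      rw [mul_sub, ← C_mul, hca, map_neg]
      ring
    have hqa : q.eval a₀ ≠ 0 := by
      intro h0
      obtain ⟨e, he⟩ := dvd_iff_isRoot.mpr h0
      rcases hqirr.isUnit_or_isUnit he with h | h
      · exact not_isUnit_X_sub_C a₀ h
      · have he0 : e ≠ 0 := h.ne_zero
        have : q.natDegree = 1 := by
          rw [he, natDegree_mul (X_sub_C_ne_zero a₀) he0, natDegree_X_sub_C,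
            natDegree_eq_zero_of_isUnit h]
        omega
    have hfac : B.charpoly = (X - C a₀) * (C c * q) := by
      rw [hchar, hpfac]; ring
    have hq'a : (C c * q).eval a₀ ≠ 0 := by
      simp only [eval_mul, eval_C]
      exact mul_ne_zero hc0 hqa
    -- eigenvector of B
    have hdet0 : (a₀ • (1 : Matrix (Fin (r + 1)) (Fin (r + 1)) F) - B).det = 0 := by
      rw [← eval_charpoly_det, hfac]
      simp
    obtain ⟨v, hv0, hv⟩ := (Matrix.exists_mulVec_eq_zero_iff).mpr hdet0
    have hBv : B *ᵥ v = a₀ • v := by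
      have := hv
      rw [sub_mulVec, smul_mulVec, one_mulVec, sub_eq_zero] at this
      exact this.symm
    set E := Module.End.eigenspace (Matrix.toLin' B) a₀ with hE
    have hvE : v ∈ E := by
      rw [hE, Module.End.mem_eigenspace_iff, Matrix.toLin'_apply, hBv]
    have hEbot : E ≠ ⊥ := by
      intro h0
      rw [h0] at hvE
      exact hv0 (Submodule.mem_bot F |>.mp hvE)
    haveI : Nontrivial E := Submodule.nontrivial_iff_ne_bot.mpr hEbot
    have hE1 : finrank F E = 1 := by
      refine le_antisymm (finrank_eigenspace_le_one B a₀ (C c * q) hq'a hfac) ?_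
      exact Module.finrank_pos
    have hspan : Submodule.span F {v} = E := by
      apply Submodule.eq_of_le_of_finrank_eq
      · rw [Submodule.span_le]
        simpa using hvE
      · rw [finrank_span_singleton hv0, hE1]
    -- eigenvalue of the conjugated x
    set Cm := Gm * Xm * Gi with hCm
    have hCvE : Cm *ᵥ v ∈ E := by
      rw [hE, Module.End.mem_eigenspace_iff, Matrix.toLin'_apply, mulVec_mulVec, hBC,
        ← mulVec_mulVec, hBv, mulVec_smul]
    obtain ⟨μ, hμ⟩ := Submodule.mem_span_singleton.mp (hspan ▸ hCvE)
    set w := Gi *ᵥ v with hw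
    have hw0 : w ≠ 0 := by
      intro h0
      apply hv0
      calc v = (Gm * Gi) *ᵥ v := by rw [hGGi, one_mulVec]
        _ = Gm *ᵥ (Gi *ᵥ v) := by rw [mulVec_mulVec]
        _ = Gm *ᵥ (0 : Fin (r + 1) → F) := by rw [← hw, h0]
        _ = 0 := by simp [mulVec_zero]
    have hXw : Xm *ᵥ w = μ • w := by
      have h6 := congrArg (fun u => Gi *ᵥ u) hμ
      simp only [mulVec_smul] at h6
      rw [mulVec_mulVec, hCm, ← mul_assoc, ← mul_assoc, hGiG, one_mul, ← mulVec_mulVec] at h6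
      exact h6.symm
    -- eigenspace of x is invariant under A and nonzero, hence everything
    set W := Module.End.eigenspace (Matrix.toLin' Xm) μ with hW
    have hwW : w ∈ W := by
      rw [hW, Module.End.mem_eigenspace_iff, Matrix.toLin'_apply, hXw]
    have hWbot : W ≠ ⊥ := by
      intro h0
      rw [h0] at hwW
      exact hw0 (Submodule.mem_bot F |>.mp hwW)
    have hWinv : ∀ u ∈ W, Matrix.toLin' A u ∈ W := by
      intro u hu
      rw [hW, Module.End.mem_eigenspace_iff, Matrix.toLin'_apply] at hu ⊢
      rw [Matrix.toLin'_apply, mulVec_mulVec, ← hAX, ← mulVec_mulVec, hu, mulVec_smul]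
    have htop : W = ⊤ := invariant_eq_top A h₁ W hWbot hWinv
    -- x is scalar
    have hXm : Xm = μ • (1 : Matrix (Fin (r + 1)) (Fin (r + 1)) F) := by
      apply Matrix.toLin'.injective
      refine LinearMap.ext fun u => ?_
      have hu : u ∈ W := htop ▸ Submodule.mem_top
      rw [hW, Module.End.mem_eigenspace_iff] at hu
      rw [hu, Matrix.toLin'_apply, smul_mulVec, one_mulVec]
    rw [Matrix.SpecialLinearGroup.mem_center_iff]
    refine ⟨μ, ?_, ?_⟩
    · have hdet := x.prop
      rw [← hXmdef, hXm, Matrix.det_smul, Matrix.det_one, mul_one] at hdet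
      simpa using hdet
    · rw [scalar_apply, ← smul_one_eq_diagonal, ← hXm]
  · -- easy direction: the center is contained in both factors
    intro x hx
    rw [Subgroup.mem_inf]
    refine ⟨Subgroup.center_le_centralizer {t₁} hx, ?_⟩
    rw [Subgroup.mem_map]
    refine ⟨x, Subgroup.center_le_centralizer {t₂} hx, ?_⟩
    have hcomm := Subgroup.mem_center_iff.mp hx g⁻¹
    simp only [MulEquiv.toMonoidHom_eq_coe, MonoidHom.coe_coe, MulAut.conj_apply, inv_inv]
    rw [hcomm, inv_mul_cancel_right]
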